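/- Let K be the field of fractions of ℚ[x₀,x₁,x₂,x₃,x₄,x₅], set A = (x₂x₄+x₃x₅)/(x₀x₁), B = (x₁x₄+x₀x₅)/(x₂x₃), C = (x₀x₂+x₁x₃)/(x₄x₅) in K, and let τ'₁, τ'₂, τ'₃ be the maps on K⁶ defined by: τ'₁ replaces (v₀,v₁) by ((v₂v₄+v₃v₅)/v₁, (v₂v₄+v₃v₅)/v₀); τ'₂ replaces (v₂,v₃) by ((v₁v₄+v₀v₅)/v₃, (v₁v₄+v₀v₅)/v₂); τ'₃ replaces (v₄,v₅) by ((v₀v₂+v₁v₃)/v₅, (v₀v₂+v₁v₃)/v₄); each fixes the remaining entries. Let X = (x₀,…,x₅). Then for every finite word w = (a₁,…,aₙ) with letters in {1,2,3}, there exist natural numbers a₁,b₁,c₁,a₂,b₂,c₂,a₃,b₃,c₃ such that τ'₍aₙ₎(⋯(τ'₍a₁₎(X))⋯) = (x₀A^{a₁}B^{b₁}C^{c₁}, x₁A^{a₁}B^{b₁}C^{c₁}, x₂A^{a₂}B^{b₂}C^{c₂}, x₃A^{a₂}B^{b₂}C^{c₂}, x₄A^{a₃}B^{b₃}C^{c₃},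 x₅A^{a₃}B^{b₃}C^{c₃}). -/

import Mathlib

noncomputable section

/-- The polynomial ring ℚ[x₀,…,x₅]. -/
abbrev P : Type := MvPolynomial (Fin 6) ℚ

/-- K = Frac(ℚ[x₀,…,x₅]). -/
abbrev K : Type := FractionRing P

/-- The images of the variables x₀,…,x₅ in K. -/
def x (i : Fin 6) : K := algebraMap P K (MvPolynomial.X i)

/-- τ'₁ : replaces (v₀, v₁) by ((v₂v₄+v₃v₅)/v₁, (v₂v₄+v₃v₅)/v₀). -/
def tau1 (v : Fin 6 → K) : Fin 6 → K := fun k =>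
  if k = 0 then (v 2 * v 4 + v 3 * v 5) / v 1
  else if k = 1 then (v 2 * v 4 + v 3 * v 5) / v 0
  else v k

/-- τ'₂ : replaces (v₂, v₃) by ((v₁v₄+v₀v₅)/v₃, (v₁v₄+v₀v₅)/v₂). -/
def tau2 (v : Fin 6 → K) : Fin 6 → K := fun k =>
  if k = 2 then (v 1 * v 4 + v 0 * v 5) / v 3
  else if k = 3 then (v 1 * v 4 + v 0 * v 5) / v 2
  else v k

/-- τ'₃ : replaces (v₄, v₅) by ((v₀v₂+v₁v₃)/v₅, (v₀v₂+v₁v₃)/v₄). -/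
def tau3 (v : Fin 6 → K) : Fin 6 → K := fun k =>
  if k = 4 then (v 0 * v 2 + v 1 * v 3) / v 5
  else if k = 5 then (v 0 * v 2 + v 1 * v 3) / v 4
  else v k

/-- τ' indexed by Fin 3: `tau i` is τ'_{i+1}. -/
def tau : Fin 3 → (Fin 6 → K) → (Fin 6 → K)
  | 0 => tau1
  | 1 => tau2
  | 2 => tau3

/-- The initial labeled seed X = (x₀,…,x₅). -/
def X0 : Fin 6 → K := x

/-- Apply the maps τ'₍a₁₎, …, τ'₍aₙ₎ along the word `w` in left-to-right order. -/
def applyWord (w : List (Fin 3)) (v : Fin 6 → K) : Fin 6 → K :=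
  w.foldl (fun u a => tau a u) v

/-- A = (x₂x₄+x₃x₅)/(x₀x₁). -/
def A : K := (x 2 * x 4 + x 3 * x 5) / (x 0 * x 1)

/-- B = (x₁x₄+x₀x₅)/(x₂x₃). -/
def B : K := (x 1 * x 4 + x 0 * x 5) / (x 2 * x 3)

/-- C = (x₀x₂+x₁x₃)/(x₄x₅). -/
def C : K := (x 0 * x 2 + x 1 * x 3) / (x 4 * x 5)


/-! ### Auxiliary machinery for the proof -/

section Aux

lemma x_ne (i : Fin 6) : x i ≠ 0 := by
  rw [x, ne_eq, IsFractionRing.to_map_eq_zero_iff]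
  exact MvPolynomial.X_ne_zero i

lemma num_ne (i j k l : Fin 6) : x i * x j + x k * x l ≠ 0 := by
  have h : x i * x j + x k * x l
      = algebraMap P K (MvPolynomial.X i * MvPolynomial.X j
        + MvPolynomial.X k * MvPolynomial.X l) := by
    simp [x, map_add, map_mul]
  rw [h, ne_eq, IsFractionRing.to_map_eq_zero_iff]
  intro hp
  have := congrArg (MvPolynomial.eval fun _ => (1 : ℚ)) hp
  simp at this

lemma A_ne : A ≠ 0 :=
  div_ne_zero (num_ne 2 4 3 5) (mul_ne_zero (x_ne 0) (x_ne 1))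

lemma B_ne : B ≠ 0 :=
  div_ne_zero (num_ne 1 4 0 5) (mul_ne_zero (x_ne 2) (x_ne 3))

lemma C_ne : C ≠ 0 :=
  div_ne_zero (num_ne 0 2 1 3) (mul_ne_zero (x_ne 4) (x_ne 5))

lemma hA : x 2 * x 4 + x 3 * x 5 = A * (x 0 * x 1) := by
  rw [A, div_mul_cancel₀ _ (mul_ne_zero (x_ne 0) (x_ne 1))]

lemma hB : x 1 * x 4 + x 0 * x 5 = B * (x 2 * x 3) := by
  rw [B, div_mul_cancel₀ _ (mul_ne_zero (x_ne 2) (x_ne 3))]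

lemma hC : x 0 * x 2 + x 1 * x 3 = C * (x 4 * x 5) := by
  rw [C, div_mul_cancel₀ _ (mul_ne_zero (x_ne 4) (x_ne 5))]

/-- Monomial in A, B, C with integer exponents. -/
def M (a b c : ℤ) : K := A ^ a * B ^ b * C ^ c

lemma M_ne (a b c : ℤ) : M a b c ≠ 0 :=
  mul_ne_zero (mul_ne_zero (zpow_ne_zero _ A_ne) (zpow_ne_zero _ B_ne))
    (zpow_ne_zero _ C_ne)

lemma M_mul (a b c d e f : ℤ) : M a b c * M d e f = M (a + d) (b + e) (c + f) := by
  simp only [M, zpow_add₀ A_ne, zpow_add₀ B_ne, zpow_add₀ C_ne]; ring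

lemma A_eqM : A = M 1 0 0 := by simp [M]
lemma B_eqM : B = M 0 1 0 := by simp [M]
lemma C_eqM : C = M 0 0 1 := by simp [M]

lemma M_congr {a b c a' b' c' : ℤ} (h1 : a = a') (h2 : b = b') (h3 : c = c') :
    M a b c = M a' b' c' := by rw [h1, h2, h3]

/-- generic key identity for the monomial bookkeeping -/
lemma key_gen (L : K) (u v w : ℤ) (hL : L = M u v w)
    (e1 e2 e3 p1 q1 r1 p2 q2 r2 p3 q3 r3 : ℤ)
    (h1 : e1 + p1 = u + (p2 + p3)) (h2 : e2 + q1 = v + (q2 + q3))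
    (h3 : e3 + r1 = w + (r2 + r3)) :
    M e1 e2 e3 * M p1 q1 r1 = L * (M p2 q2 r2 * M p3 q3 r3) := by
  rw [M_mul, M_mul, hL, M_mul]
  exact M_congr h1 h2 h3

/-- generic entry computation -/
lemma master (u v' s t a b L N2 N3 Dm Rm : K)
    (hb : b ≠ 0) (hD : Dm ≠ 0)
    (hL : u * s + v' * t = L * (a * b))
    (hkey : Rm * Dm = L * (N2 * N3)) :
    (u * N2 * (s * N3) + v' * N2 * (t * N3)) / (b * Dm) = a * Rm := by
  rw [div_eq_iff (mul_ne_zero hb hD)]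
  linear_combination (N2 * N3) * hL - (a * b) * hkey

/-- The exponent invariant: nonnegativity plus the conserved quadratic. -/
def good (p q r : ℤ) : Prop :=
  0 ≤ p ∧ 0 ≤ q ∧ 0 ≤ r ∧ p * p + q * q + r * r - p * q - q * r - r * p = p

lemma good_zero : good 0 0 0 := by norm_num [good]

lemma good.le1 {p q r : ℤ} (h : good p q r) : p ≤ q + r + 1 := by
  obtain ⟨hp, hq, hr, hQ⟩ := h
  by_contra hcon
  push_neg at hcon
  nlinarith [mul_nonneg hp (by linarith : (0:ℤ) ≤ p - q - r - 2),
    sq_nonneg (q - r), mul_nonneg hq hr]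

lemma good.le2 {p q r : ℤ} (h : good p q r) : q ≤ p + r := by
  obtain ⟨hp, hq, hr, hQ⟩ := h
  by_contra hcon
  push_neg at hcon
  nlinarith [mul_nonneg hq (by linarith : (0:ℤ) ≤ q - p - r - 1),
    sq_nonneg (p - r), mul_nonneg hp hr]

lemma good.le3 {p q r : ℤ} (h : good p q r) : r ≤ p + q := by
  obtain ⟨hp, hq, hr, hQ⟩ := h
  by_contra hcon
  push_neg at hcon
  nlinarith [mul_nonneg hr (by linarith : (0:ℤ) ≤ r - p - q - 1),
    sq_nonneg (p - q), mul_nonneg hp hq]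

lemma good.upd1 {p q r : ℤ} (h : good p q r) : good (q + r + 1 - p) q r :=
  ⟨by have := h.le1; linarith, h.2.1, h.2.2.1, by linear_combination h.2.2.2⟩

lemma good.upd2 {p q r : ℤ} (h : good p q r) : good p (p + r - q) r :=
  ⟨h.1, by have := h.le2; linarith, h.2.2.1, by linear_combination h.2.2.2⟩

lemma good.upd3 {p q r : ℤ} (h : good p q r) : good p q (p + q - r) :=
  ⟨h.1, h.2.1, by have := h.le3; linarith, by linear_combination h.2.2.2⟩

/-- The strengthened factorization invariant. -/
def Fctd (v : Fin 6 → K) : Prop :=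
  ∃ a1 b1 c1 a2 b2 c2 a3 b3 c3 : ℤ,
    good a1 a2 a3 ∧ good b2 b1 b3 ∧ good c3 c1 c2 ∧
    v = ![x 0 * M a1 b1 c1, x 1 * M a1 b1 c1, x 2 * M a2 b2 c2,
          x 3 * M a2 b2 c2, x 4 * M a3 b3 c3, x 5 * M a3 b3 c3]

lemma fctd_X0 : Fctd X0 := by
  refine ⟨0,0,0,0,0,0,0,0,0, good_zero, good_zero, good_zero, ?_⟩
  funext k
  fin_cases k
  · show x 0 = x 0 * M 0 0 0; simp [M]
  · show x 1 = x 1 * M 0 0 0; simp [M]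
  · show x 2 = x 2 * M 0 0 0; simp [M]
  · show x 3 = x 3 * M 0 0 0; simp [M]
  · show x 4 = x 4 * M 0 0 0; simp [M]
  · show x 5 = x 5 * M 0 0 0; simp [M]

lemma fctd_tau1 {v : Fin 6 → K} (h : Fctd v) : Fctd (tau1 v) := by
  obtain ⟨a1,b1,c1,a2,b2,c2,a3,b3,c3, ga, gb, gc, hv⟩ := h
  subst hv
  refine ⟨a2 + a3 + 1 - a1, b2 + b3 - b1, c3 + c2 - c1, a2, b2, c2, a3, b3, c3,
    ga.upd1, gb.upd2, gc.upd2, ?_⟩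
  funext k
  fin_cases k <;> first | rfl | simp [tau1]
  · exact master (x 2) (x 3) (x 4) (x 5) (x 0) (x 1) A _ _ _ _ (x_ne 1) (M_ne _ _ _)
      hA (key_gen A 1 0 0 A_eqM _ _ _ _ _ _ _ _ _ _ _ _ (by ring) (by ring) (by ring))
  · exact master (x 2) (x 3) (x 4) (x 5) (x 1) (x 0) A _ _ _ _ (x_ne 0) (M_ne _ _ _)
      (hA.trans (by ring)) (key_gen A 1 0 0 A_eqM _ _ _ _ _ _ _ _ _ _ _ _ (by ring) (by ring) (by ring))

lemma fctd_tau2 {v : Fin 6 → K} (h : Fctd v) : Fctd (tau2 v) := by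
  obtain ⟨a1,b1,c1,a2,b2,c2,a3,b3,c3, ga, gb, gc, hv⟩ := h
  subst hv
  refine ⟨a1, b1, c1, a1 + a3 - a2, b1 + b3 + 1 - b2, c3 + c1 - c2, a3, b3, c3,
    ga.upd2, gb.upd1, gc.upd3, ?_⟩
  funext k
  fin_cases k <;> first | rfl | simp [tau2]
  · exact master (x 1) (x 0) (x 4) (x 5) (x 2) (x 3) B _ _ _ _ (x_ne 3) (M_ne _ _ _)
      hB (key_gen B 0 1 0 B_eqM _ _ _ _ _ _ _ _ _ _ _ _ (by ring) (by ring) (by ring))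
  · exact master (x 1) (x 0) (x 4) (x 5) (x 3) (x 2) B _ _ _ _ (x_ne 2) (M_ne _ _ _)
      (hB.trans (by ring)) (key_gen B 0 1 0 B_eqM _ _ _ _ _ _ _ _ _ _ _ _ (by ring) (by ring) (by ring))

lemma fctd_tau3 {v : Fin 6 → K} (h : Fctd v) : Fctd (tau3 v) := by
  obtain ⟨a1,b1,c1,a2,b2,c2,a3,b3,c3, ga, gb, gc, hv⟩ := h
  subst hv
  refine ⟨a1, b1, c1, a2, b2, c2, a1 + a2 - a3, b2 + b1 - b3, c1 + c2 + 1 - c3,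
    ga.upd3, gb.upd3, gc.upd1, ?_⟩
  funext k
  fin_cases k <;> first | rfl | simp [tau3]
  · exact master (x 0) (x 1) (x 2) (x 3) (x 4) (x 5) C _ _ _ _ (x_ne 5) (M_ne _ _ _)
      hC (key_gen C 0 0 1 C_eqM _ _ _ _ _ _ _ _ _ _ _ _ (by ring) (by ring) (by ring))
  · exact master (x 0) (x 1) (x 2) (x 3) (x 5) (x 4) C _ _ _ _ (x_ne 4) (M_ne _ _ _)
      (hC.trans (by ring)) (key_gen C 0 0 1 C_eqM _ _ _ _ _ _ _ _ _ _ _ _ (by ring) (by ring) (by ring))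

lemma fctd_tau (a : Fin 3) {v : Fin 6 → K} (h : Fctd v) : Fctd (tau a v) := by
  fin_cases a
  · exact fctd_tau1 h
  · exact fctd_tau2 h
  · exact fctd_tau3 h

lemma fctd_applyWord (w : List (Fin 3)) {v : Fin 6 → K} (h : Fctd v) :
    Fctd (applyWord w v) := by
  induction w generalizing v with
  | nil => exact h
  | cons a w ih => exact ih (fctd_tau a h)

lemma pow_toNat {y : K} {n : ℤ} (hn : 0 ≤ n) : y ^ n.toNat = y ^ n := by
  rw [← zpow_natCast, Int.toNat_of_nonneg hn]

end Aux

/-- The Factorization Phenomenon (Proposition 2.4): every cluster produced by a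
τ-mutation sequence factors with leading terms xᵢ and nonnegative exponents of
A, B, C, antipodal positions sharing exponents. -/
theorem factorization_phenomenon (w : List (Fin 3)) :
    ∃ a₁ b₁ c₁ a₂ b₂ c₂ a₃ b₃ c₃ : ℕ,
      applyWord w X0 =
        ![x 0 * A ^ a₁ * B ^ b₁ * C ^ c₁,
          x 1 * A ^ a₁ * B ^ b₁ * C ^ c₁,
          x 2 * A ^ a₂ * B ^ b₂ * C ^ c₂,
          x 3 * A ^ a₂ * B ^ b₂ * C ^ c₂,
          x 4 * A ^ a₃ * B ^ b₃ * C ^ c₃,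
          x 5 * A ^ a₃ * B ^ b₃ * C ^ c₃] := by
  obtain ⟨a1,b1,c1,a2,b2,c2,a3,b3,c3, ga, gb, gc, hv⟩ := fctd_applyWord w fctd_X0
  refine ⟨a1.toNat, b1.toNat, c1.toNat, a2.toNat, b2.toNat, c2.toNat,
    a3.toNat, b3.toNat, c3.toNat, ?_⟩
  rw [hv]
  have e1 := pow_toNat (y := A) ga.1
  have e2 := pow_toNat (y := B) gb.2.1
  have e3 := pow_toNat (y := C) gc.2.1
  have e4 := pow_toNat (y := A) ga.2.1
  have e5 := pow_toNat (y := B) gb.1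
  have e6 := pow_toNat (y := C) gc.2.2.1
  have e7 := pow_toNat (y := A) ga.2.2.1
  have e8 := pow_toNat (y := B) gb.2.2.1
  have e9 := pow_toNat (y := C) gc.1
  simp only [Matrix.vecCons, Fin.cons_inj]
  refine ⟨?_, ?_, ?_, ?_, ?_, ?_, trivial⟩ <;>
    simp only [M, ← e1, ← e2, ← e3, ← e4, ← e5, ← e6, ← e7, ← e8, ← e9] <;> ring
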